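/- arXiv:2204.00551 — 2 statements merged into one kernel-verified Lean document; each statement's English description precedes it below -/
import Mathlib

section
/- Lemma B.2, pointwise form (Hadamard derivative of the selected-sample CDF functional). Let q : [0,1] → ℝ be continuously differentiable with q'(u) > 0 for every u ∈ [0,1] (so q is strictly increasing), let w : [0,1] → ℝ be continuous, and let h : [0,1] → ℝ be continuous. For each t > 0 let h_t : [0,1] → ℝ be bounded and measurable, with sup_{u ∈ [0,1]} |h_t(u) − h(u)| → 0 as t → 0⁺. Fix y ∈ ℝ with q(0) < y < q(1) and let u* ∈ (0,1) be the unique point with q(u*) = y. Then (1/t)·( ∫₀¹ 1{q(u) + t·h_t(u) ≤ y}·w(u) du − ∫₀¹ 1{q(u) ≤ y}·w(u) du ) → − (w(u*)/q'(u*))·h(u*) as t → 0⁺. -/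
set_option maxHeartbeats 1000000


open MeasureTheory Set Topology Filter

/-- Lemma B.2, pointwise form (Hadamard derivative of the selected-sample CDF
functional `F(y; b) := ∫₀¹ 1{b(u) ≤ y}·w(u) du` at `b = q`, in a direction `h`
approached along `h_t`, evaluated at an interior point `y = q(u*)`). -/
theorem hadamard_derivative_selected_cdf
    (q q' w h : ℝ → ℝ) (H : ℝ → ℝ → ℝ)
    (hq_deriv : ∀ u ∈ Icc (0 : ℝ) 1, HasDerivWithinAt q (q' u) (Icc (0 : ℝ) 1) u)
    (hq'_cont : ContinuousOn q' (Icc (0 : ℝ) 1))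
    (hq'_pos : ∀ u ∈ Icc (0 : ℝ) 1, 0 < q' u)
    (hw : ContinuousOn w (Icc (0 : ℝ) 1))
    (hh : ContinuousOn h (Icc (0 : ℝ) 1))
    (hH : ∀ t : ℝ, 0 < t →
      Measurable (H t) ∧ ∃ M : ℝ, ∀ u ∈ Icc (0 : ℝ) 1, |H t u| ≤ M)
    (hconv : ∀ ε > (0 : ℝ), ∃ δ > (0 : ℝ), ∀ t : ℝ, 0 < t → t < δ →
      ∀ u ∈ Icc (0 : ℝ) 1, |H t u - h u| ≤ ε)
    (y : ℝ) (hy₀ : q 0 < y) (hy₁ : y < q 1)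
    (ustar : ℝ) (hustar : ustar ∈ Ioo (0 : ℝ) 1) (hq_ustar : q ustar = y) :
    Tendsto
      (fun t : ℝ =>
        (1 / t) *
          ((∫ u in Icc (0 : ℝ) 1, (if q u + t * H t u ≤ y then (1 : ℝ) else 0) * w u) -
            ∫ u in Icc (0 : ℝ) 1, (if q u ≤ y then (1 : ℝ) else 0) * w u))
      (𝓝[>] 0) (𝓝 (-(w ustar / q' ustar) * h ustar)) := by
  obtain ⟨hu0, hu1⟩ := hustar
  have hmemu : ustar ∈ Icc (0:ℝ) 1 := ⟨hu0.le, hu1.le⟩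
  have hq_cont : ContinuousOn q (Icc (0:ℝ) 1) :=
    fun u hu => (hq_deriv u hu).continuousWithinAt
  obtain ⟨p, hpdef⟩ : ∃ p : ℝ, p = q' ustar := ⟨_, rfl⟩
  have hp_pos : 0 < p := hpdef ▸ hq'_pos ustar hmemu
  obtain ⟨a, hadef⟩ : ∃ a : ℝ, a = h ustar := ⟨_, rfl⟩
  -- clamp to the unit interval
  set cl : ℝ → ℝ := fun u => min 1 (max 0 u) with hcldef
  have hcl_cont : Continuous cl := continuous_const.min (continuous_const.max continuous_id)
  have hcl_mem : ∀ u, cl u ∈ Icc (0:ℝ) 1 := by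
    intro u
    exact ⟨le_min zero_le_one (le_max_left 0 u), min_le_left _ _⟩
  have hcl_eq : ∀ u ∈ Icc (0:ℝ) 1, cl u = u := by
    intro u hu
    simp only [hcldef]
    rw [max_eq_right hu.1, min_eq_right hu.2]
  set Q : ℝ → ℝ := fun u => q (cl u) with hQdef
  set W : ℝ → ℝ := fun u => w (cl u) with hWdef
  have hQ_cont : Continuous Q := hq_cont.comp_continuous hcl_cont hcl_mem
  have hW_cont : Continuous W := hw.comp_continuous hcl_cont hcl_mem
  have hQ_eq : ∀ u ∈ Icc (0:ℝ) 1, Q u = q u := by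
    intro u hu; simp only [hQdef]; rw [hcl_eq u hu]
  have hW_eq : ∀ u ∈ Icc (0:ℝ) 1, W u = w u := by
    intro u hu; simp only [hWdef]; rw [hcl_eq u hu]
  -- strict monotonicity of q on [0,1]
  have hq_mono : StrictMonoOn q (Icc (0:ℝ) 1) := by
    apply strictMonoOn_of_deriv_pos (convex_Icc 0 1) hq_cont
    intro x hx
    rw [interior_Icc] at hx
    have hx' : x ∈ Icc (0:ℝ) 1 := Ioo_subset_Icc_self hx
    have hd := (hq_deriv x hx').hasDerivAt (Icc_mem_nhds hx.1 hx.2)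
    rw [hd.deriv]
    exact hq'_pos x hx'
  have hqle : ∀ u ∈ Icc (0:ℝ) 1, (q u ≤ y ↔ u ≤ ustar) := by
    intro u hu
    constructor
    · intro hqu
      by_contra hlt
      push_neg at hlt
      have := hq_mono hmemu hu hlt
      rw [hq_ustar] at this
      linarith
    · intro hle
      have := hq_mono.monotoneOn hu hmemu hle
      rw [hq_ustar] at this
      exact this
  -- uniform bound on h and H t
  obtain ⟨C₀, hC₀⟩ := (isCompact_Icc).exists_bound_of_continuousOn hh
  obtain ⟨C, hCdef⟩ : ∃ C : ℝ, C = max C₀ 0 + 1 := ⟨_, rfl⟩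
  have hC_pos : 0 < C := by rw [hCdef]; positivity
  obtain ⟨δ₁, hδ₁_pos, hδ₁⟩ := hconv 1 one_pos
  have hHb : ∀ t : ℝ, 0 < t → t < δ₁ → ∀ u ∈ Icc (0:ℝ) 1, |H t u| ≤ C := by
    intro t ht htδ u hu
    have h1 := hδ₁ t ht htδ u hu
    have h2 : |h u| ≤ C₀ := by simpa [Real.norm_eq_abs] using hC₀ u hu
    have : |H t u| ≤ |H t u - h u| + |h u| := by
      calc |H t u| = |(H t u - h u) + h u| := by ring_nf
        _ ≤ |H t u - h u| + |h u| := abs_add_le _ _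
    have h3 : C₀ ≤ max C₀ 0 := le_max_left _ _
    rw [hCdef]
    linarith
  rw [Metric.tendsto_nhdsWithin_nhds]
  intro ε hε
  -- constants
  obtain ⟨κ, hκdef⟩ : ∃ κ : ℝ, κ = 2 * |a| / p ^ 2 + 4 / p := ⟨_, rfl⟩
  have hκ_pos : 0 < κ := by rw [hκdef]; positivity
  obtain ⟨m', hm'def⟩ : ∃ m' : ℝ, m' = |a| / p + κ := ⟨_, rfl⟩
  have hm'_pos : 0 < m' := by rw [hm'def, hκdef]; positivity
  obtain ⟨K, hKdef⟩ : ∃ K : ℝ, K = |w ustar| * κ + 2 * m' + 1 := ⟨_, rfl⟩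
  have hK_pos : 0 < K := by rw [hKdef]; nlinarith [abs_nonneg (w ustar)]
  obtain ⟨ε', hε'def⟩ : ∃ e : ℝ, e = min 1 (min (p / 2) (ε / K)) := ⟨_, rfl⟩
  have hε'_pos : 0 < ε' := by
    rw [hε'def]
    apply lt_min one_pos
    apply lt_min (by positivity) (by positivity)
  have hε'_le1 : ε' ≤ 1 := hε'def ▸ min_le_left _ _
  have hε'_lep : ε' ≤ p / 2 := hε'def ▸ le_trans (min_le_right _ _) (min_le_left _ _)
  have hε'_leε : ε' ≤ ε / K := hε'def ▸ le_trans (min_le_right _ _) (min_le_right _ _)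
  -- pick η
  obtain ⟨η, hη_pos, hηa, hηb, hηc, hηd, hη⟩ :
      ∃ η > (0:ℝ), (ustar - η) ∈ Icc (0:ℝ) 1 ∧ (ustar + η) ∈ Icc (0:ℝ) 1 ∧
        η ≤ ustar / 2 ∧ η ≤ (1 - ustar) / 2 ∧
        ∀ u ∈ Icc (0:ℝ) 1, |u - ustar| ≤ η →
          |h u - a| ≤ ε' ∧ |w u - w ustar| ≤ ε' ∧ |q' u - p| ≤ ε' := by
    obtain ⟨η₁, hη₁p, hη₁⟩ := Metric.continuousWithinAt_iff.1 (hh.continuousWithinAt hmemu) ε' hε'_pos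
    obtain ⟨η₂, hη₂p, hη₂⟩ := Metric.continuousWithinAt_iff.1 (hw.continuousWithinAt hmemu) ε' hε'_pos
    obtain ⟨η₃, hη₃p, hη₃⟩ :=
      Metric.continuousWithinAt_iff.1 (hq'_cont.continuousWithinAt hmemu) ε' hε'_pos
    obtain ⟨e, hedef⟩ :
        ∃ e : ℝ, e = min (min (η₁/2) (η₂/2)) (min (η₃/2) (min ustar (1-ustar) / 2)) := ⟨_, rfl⟩
    have hmin_pos : 0 < min ustar (1-ustar) := lt_min hu0 (by linarith)
    have he_pos : 0 < e := by
      rw [hedef]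
      exact lt_min (lt_min (by linarith) (by linarith)) (lt_min (by linarith) (by linarith))
    have he1 : e ≤ η₁/2 := hedef ▸ le_trans (min_le_left _ _) (min_le_left _ _)
    have he2 : e ≤ η₂/2 := hedef ▸ le_trans (min_le_left _ _) (min_le_right _ _)
    have he3 : e ≤ η₃/2 := hedef ▸ le_trans (min_le_right _ _) (min_le_left _ _)
    have he4 : e ≤ min ustar (1-ustar) / 2 := hedef ▸ le_trans (min_le_right _ _) (min_le_right _ _)
    have he5 : e ≤ ustar/2 := by
      have := min_le_left ustar (1-ustar); linarith
    have he6 : e ≤ (1-ustar)/2 := by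
      have := min_le_right ustar (1-ustar); linarith
    refine ⟨e, he_pos, ⟨by linarith, by linarith⟩, ⟨by linarith, by linarith⟩, he5, he6, ?_⟩
    intro u hu hud
    have hd1 : dist u ustar < η₁ := by rw [Real.dist_eq]; linarith
    have hd2 : dist u ustar < η₂ := by rw [Real.dist_eq]; linarith
    have hd3 : dist u ustar < η₃ := by rw [Real.dist_eq]; linarith
    have r1 := hη₁ hu hd1
    have r2 := hη₂ hu hd2
    have r3 := hη₃ hu hd3
    rw [Real.dist_eq] at r1 r2 r3
    exact ⟨by rw [hadef]; exact r1.le, r2.le, by rw [hpdef]; exact r3.le⟩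
  set J : Set ℝ := Icc (ustar - η) (ustar + η) with hJdef
  have hJsub : J ⊆ Icc (0:ℝ) 1 := by
    intro u hu
    exact ⟨le_trans hηa.1 hu.1, le_trans hu.2 hηb.2⟩
  have hJdist : ∀ u ∈ J, |u - ustar| ≤ η := by
    intro u hu
    rw [abs_le]
    exact ⟨by linarith [hu.1], by linarith [hu.2]⟩
  -- ρ : distance of y from q at the edge of J
  obtain ⟨ρ, hρdef⟩ : ∃ r : ℝ, r = min (y - q (ustar - η)) (q (ustar + η) - y) := ⟨_, rfl⟩
  have hρ_pos : 0 < ρ := by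
    have h1 : q (ustar - η) < y := by
      have := hq_mono hηa hmemu (by linarith)
      rw [hq_ustar] at this; exact this
    have h2 : y < q (ustar + η) := by
      have := hq_mono hmemu hηb (by linarith)
      rw [hq_ustar] at this; exact this
    rw [hρdef]
    exact lt_min (by linarith) (by linarith)
  obtain ⟨δ₂, hδ₂_pos, hδ₂⟩ := hconv ε' hε'_pos
  refine ⟨min (min δ₁ δ₂) (min (ρ / C) (η / m')), by positivity, ?_⟩
  intro t ht htδ
  rw [Real.dist_eq, sub_zero, abs_of_pos ht] at htδ
  have ht1 : t < δ₁ := lt_of_lt_of_le htδ (le_trans (min_le_left _ _) (min_le_left _ _))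
  have ht2 : t < δ₂ := lt_of_lt_of_le htδ (le_trans (min_le_left _ _) (min_le_right _ _))
  have htρ : t * C < ρ := by
    have : t < ρ / C := lt_of_lt_of_le htδ (le_trans (min_le_right _ _) (min_le_left _ _))
    calc t * C < (ρ / C) * C := by exact mul_lt_mul_of_pos_right this hC_pos
      _ = ρ := by field_simp
  have htm : t * m' ≤ η := by
    have : t < η / m' := lt_of_lt_of_le htδ (le_trans (min_le_right _ _) (min_le_right _ _))
    calc t * m' ≤ (η / m') * m' := mul_le_mul_of_nonneg_right this.le hm'_pos.le
      _ = η := by field_simp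
  -- bounds on H t for this t
  have hHC : ∀ u ∈ Icc (0:ℝ) 1, |H t u| ≤ C := hHb t ht ht1
  have hHa : ∀ u ∈ J, |H t u - a| ≤ 2 * ε' := by
    intro u hu
    have h1 := hδ₂ t ht ht2 u (hJsub hu)
    have h2 := (hη u (hJsub hu) (hJdist u hu)).1
    calc |H t u - a| = |(H t u - h u) + (h u - a)| := by ring_nf
      _ ≤ |H t u - h u| + |h u - a| := abs_add_le _ _
      _ ≤ 2 * ε' := by linarith
  -- mean value estimate on J
  have hMVT : ∀ u ∈ J, |q u - y - p * (u - ustar)| ≤ ε' * |u - ustar| := by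
    intro u hu
    have humem : ustar ∈ J := by
      rw [hJdef]; exact ⟨by linarith, by linarith⟩
    have hder : ∀ v ∈ J, HasDerivWithinAt (fun z => q z - p * z) (q' v - p) J v := by
      intro v hv
      have h1 := (hq_deriv v (hJsub hv)).mono hJsub
      have h2 : HasDerivWithinAt (fun z => p * z) p J v := by
        simpa using (hasDerivWithinAt_id v J).const_mul p
      exact h1.sub h2
    have hbound : ∀ v ∈ J, ‖q' v - p‖ ≤ ε' := by
      intro v hv
      rw [Real.norm_eq_abs]
      exact (hη v (hJsub hv) (hJdist v hv)).2.2
    have hJconv : Convex ℝ J := by rw [hJdef]; exact convex_Icc _ _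
    have key := Convex.norm_image_sub_le_of_norm_hasDerivWithin_le hder hbound hJconv humem hu
    rw [Real.norm_eq_abs, Real.norm_eq_abs] at key
    have heq : q u - p * u - (q ustar - p * ustar) = q u - y - p * (u - ustar) := by
      rw [hq_ustar]; ring
    rw [heq] at key
    exact key
  -- bracketing constants
  obtain ⟨cp, hcpdef⟩ : ∃ c : ℝ, c = a / p + κ * ε' := ⟨_, rfl⟩
  obtain ⟨cm, hcmdef⟩ : ∃ c : ℝ, c = a / p - κ * ε' := ⟨_, rfl⟩
  have hcp_abs : |cp| ≤ m' := by
    have h1 : |a / p| ≤ |a| / p := by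
      rw [abs_div, abs_of_pos hp_pos]
    have h2 : |κ * ε'| ≤ κ := by
      rw [abs_mul, abs_of_pos hκ_pos, abs_of_pos hε'_pos]
      nlinarith
    calc |cp| = |a / p + κ * ε'| := by rw [hcpdef]
      _ ≤ |a / p| + |κ * ε'| := abs_add_le _ _
      _ ≤ m' := by rw [hm'def]; linarith
  have hcm_abs : |cm| ≤ m' := by
    have h1 : |a / p| ≤ |a| / p := by
      rw [abs_div, abs_of_pos hp_pos]
    have h2 : |κ * ε'| ≤ κ := by
      rw [abs_mul, abs_of_pos hκ_pos, abs_of_pos hε'_pos]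
      nlinarith
    calc |cm| = |a / p + -(κ * ε')| := by rw [hcmdef]; ring_nf
      _ ≤ |a / p| + |κ * ε'| := by
          refine le_trans (abs_add_le _ _) ?_
          rw [abs_neg]
      _ ≤ m' := by rw [hm'def]; linarith
  -- core algebraic inequalities
  have hp2 : (0:ℝ) < p ^ 2 := by positivity
  have hcore1 : a + 2 * ε' ≤ (p - ε') * cp := by
    have h9 : ((p - ε') * cp - (a + 2*ε')) * p^2
        = p*ε'* (|a| - a) + |a| * ε'*(p - 2*ε') + p*ε'*(2*p - 4*ε') := by
      rw [hcpdef, hκdef]; field_simp; ring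
    have h10 : 0 ≤ ((p - ε') * cp - (a + 2*ε')) * p^2 := by
      rw [h9]
      have := le_abs_self a
      have := abs_nonneg a
      have v1 : 0 ≤ p*ε'* (|a| - a) := by
        apply mul_nonneg (by positivity); linarith
      have v2 : 0 ≤ |a| * ε'*(p - 2*ε') := by
        apply mul_nonneg (by positivity); linarith
      have v3 : 0 ≤ p*ε'*(2*p - 4*ε') := by
        apply mul_nonneg (by positivity); linarith
      linarith
    have h11 := (mul_nonneg_iff_of_pos_right hp2).1 h10
    linarith
  have hcore2 : a + 2 * ε' ≤ (p + ε') * cp := by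
    have h9 : ((p + ε') * cp - (a + 2*ε')) * p^2
        = p*ε'* (|a| + a) + |a| * p*ε' + 2*p^2*ε' + 2*|a| * ε'^2 + 4*p*ε'^2 := by
      rw [hcpdef, hκdef]; field_simp; ring
    have h10 : 0 ≤ ((p + ε') * cp - (a + 2*ε')) * p^2 := by
      rw [h9]
      have := neg_abs_le a
      have := abs_nonneg a
      have v1 : 0 ≤ p*ε'* (|a| + a) := by
        apply mul_nonneg (by positivity); linarith
      have v2 : 0 ≤ |a| * p*ε' := by positivity
      have v3 : 0 ≤ 2*p^2*ε' := by positivity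
      have v4 : 0 ≤ 2*|a| * ε'^2 := by positivity
      have v5 : 0 ≤ 4*p*ε'^2 := by positivity
      linarith
    have h11 := (mul_nonneg_iff_of_pos_right hp2).1 h10
    linarith
  have hcore3 : cm * (p - ε') ≤ a - 2 * ε' := by
    have h9 : ((a - 2*ε') - cm * (p - ε')) * p^2
        = p*ε'* (|a| + a) + |a| * ε'*(p - 2*ε') + p*ε'*(2*p - 4*ε') := by
      rw [hcmdef, hκdef]; field_simp; ring
    have h10 : 0 ≤ ((a - 2*ε') - cm * (p - ε')) * p^2 := by
      rw [h9]
      have := neg_abs_le a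
      have := abs_nonneg a
      have v1 : 0 ≤ p*ε'* (|a| + a) := by
        apply mul_nonneg (by positivity); linarith
      have v2 : 0 ≤ |a| * ε'*(p - 2*ε') := by
        apply mul_nonneg (by positivity); linarith
      have v3 : 0 ≤ p*ε'*(2*p - 4*ε') := by
        apply mul_nonneg (by positivity); linarith
      linarith
    have h11 := (mul_nonneg_iff_of_pos_right hp2).1 h10
    linarith
  have hcore4 : cm * (p + ε') ≤ a - 2 * ε' := by
    have h9 : ((a - 2*ε') - cm * (p + ε')) * p^2
        = p*ε'* (|a| - a) + |a| * p*ε' + 2*p^2*ε' + 2*|a| * ε'^2 + 4*p*ε'^2 := by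
      rw [hcmdef, hκdef]; field_simp; ring
    have h10 : 0 ≤ ((a - 2*ε') - cm * (p + ε')) * p^2 := by
      rw [h9]
      have := le_abs_self a
      have := abs_nonneg a
      have v1 : 0 ≤ p*ε'* (|a| - a) := by
        apply mul_nonneg (by positivity); linarith
      have v2 : 0 ≤ |a| * p*ε' := by positivity
      have v3 : 0 ≤ 2*p^2*ε' := by positivity
      have v4 : 0 ≤ 2*|a| * ε'^2 := by positivity
      have v5 : 0 ≤ 4*p*ε'^2 := by positivity
      linarith
    have h11 := (mul_nonneg_iff_of_pos_right hp2).1 h10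
    linarith
  -- the perturbed sublevel set
  set S : Set ℝ := {u : ℝ | Q u + t * H t u ≤ y} with hSdef
  have hS_meas : MeasurableSet S := by
    have : Measurable fun u => Q u + t * H t u :=
      hQ_cont.measurable.add (((hH t ht).1).const_mul t)
    exact measurableSet_le this measurable_const
  -- key inclusions
  have hcp_tabs : |t * cp| ≤ t * m' := by
    rw [abs_mul, abs_of_pos ht]
    exact mul_le_mul_of_nonneg_left hcp_abs ht.le
  have hcm_tabs : |t * cm| ≤ t * m' := by
    rw [abs_mul, abs_of_pos ht]
    exact mul_le_mul_of_nonneg_left hcm_abs ht.le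
  have hfacm : (0:ℝ) < p - ε' := by linarith
  have hfacp : (0:ℝ) < p + ε' := by linarith
  have hL1 : Icc (0:ℝ) (ustar - t * cp) ⊆ Icc (0:ℝ) 1 ∩ S := by
    intro u hu
    obtain ⟨hu0', hu2⟩ := hu
    have h1' : u ≤ 1 := by
      have := (abs_le.1 hcp_tabs).1
      linarith [htm, hηd]
    have humem : u ∈ Icc (0:ℝ) 1 := ⟨hu0', h1'⟩
    refine ⟨humem, ?_⟩
    show Q u + t * H t u ≤ y
    rw [hQ_eq u humem]
    by_cases hcase : u < ustar - η
    · have h1 : q u ≤ q (ustar - η) := hq_mono.monotoneOn humem hηa hcase.le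
      have h2 : ρ ≤ y - q (ustar - η) := hρdef ▸ min_le_left _ _
      have h3 : t * H t u ≤ t * C :=
        mul_le_mul_of_nonneg_left (le_trans (le_abs_self _) (hHC u humem)) ht.le
      linarith only [h1, h2, h3, htρ]
    · push_neg at hcase
      have huJ : u ∈ J := by
        rw [hJdef]
        refine ⟨hcase, ?_⟩
        have := (abs_le.1 hcp_tabs).1
        linarith [htm]
      have hup := (abs_le.1 (hMVT u huJ)).2
      have hHle : H t u ≤ a + 2*ε' := by linarith [(abs_le.1 (hHa u huJ)).2]
      have h3 : t * H t u ≤ t * (a + 2*ε') := mul_le_mul_of_nonneg_left hHle ht.le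
      have h4 : t * (a + 2*ε') ≤ t * ((p - ε') * cp) := mul_le_mul_of_nonneg_left hcore1 ht.le
      have h4' : t * (a + 2*ε') ≤ t * ((p + ε') * cp) := mul_le_mul_of_nonneg_left hcore2 ht.le
      rcases le_or_gt u ustar with hle | hgt
      · have habs2 : |u - ustar| = -(u - ustar) := abs_of_nonpos (by linarith)
        rw [habs2] at hup
        have h5 : (p - ε') * (u - ustar) ≤ (p - ε') * (-(t * cp)) :=
          mul_le_mul_of_nonneg_left (by linarith only [hu2]) hfacm.le
        linarith only [h5, h4, h3, hup]
      · have habs2 : |u - ustar| = u - ustar := abs_of_nonneg (by linarith)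
        rw [habs2] at hup
        have h5 : (p + ε') * (u - ustar) ≤ (p + ε') * (-(t * cp)) :=
          mul_le_mul_of_nonneg_left (by linarith only [hu2]) hfacp.le
        linarith only [h5, h4', h3, hup]
  have hL2 : Icc (0:ℝ) 1 ∩ S ⊆ Icc (0:ℝ) (ustar - t * cm) := by
    rintro u ⟨humem, huS⟩
    have hSu : q u + t * H t u ≤ y := by
      have h0 : Q u + t * H t u ≤ y := huS
      rwa [hQ_eq u humem] at h0
    refine ⟨humem.1, ?_⟩
    by_cases h1 : u ≤ ustar - t * m'
    · have := (abs_le.1 hcm_tabs).2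
      linarith
    · push_neg at h1
      have hlt : u < ustar + η := by
        by_contra hge
        push_neg at hge
        have h2 : q (ustar + η) ≤ q u := hq_mono.monotoneOn hηb humem hge
        have h3 : ρ ≤ q (ustar + η) - y := hρdef ▸ min_le_right _ _
        have h4 : -(t * C) ≤ t * H t u := by
          have h5 := (abs_le.1 (hHC u humem)).1
          have h6 := mul_le_mul_of_nonneg_left h5 ht.le
          linarith only [h6]
        linarith only [h2, h3, h4, htρ, hSu]
      have huJ : u ∈ J := by
        rw [hJdef]
        exact ⟨by linarith [htm], hlt.le⟩
      have hlo := (abs_le.1 (hMVT u huJ)).1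
      have hHge : t * (a - 2*ε') ≤ t * H t u :=
        mul_le_mul_of_nonneg_left (by linarith [(abs_le.1 (hHa u huJ)).1]) ht.le
      have h4 : t * (cm * (p - ε')) ≤ t * (a - 2*ε') := mul_le_mul_of_nonneg_left hcore3 ht.le
      have h4' : t * (cm * (p + ε')) ≤ t * (a - 2*ε') := mul_le_mul_of_nonneg_left hcore4 ht.le
      rcases le_or_gt ustar u with hge | hlt2
      · have habs2 : |u - ustar| = u - ustar := abs_of_nonneg (by linarith)
        rw [habs2] at hlo
        have h6 : (p - ε') * (u - ustar) ≤ (p - ε') * (-(t * cm)) := by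
          linarith only [hlo, hSu, hHge, h4]
        have h7 := le_of_mul_le_mul_left h6 hfacm
        linarith only [h7]
      · have habs2 : |u - ustar| = -(u - ustar) := abs_of_nonpos (by linarith)
        rw [habs2] at hlo
        have h6 : (p + ε') * (u - ustar) ≤ (p + ε') * (-(t * cm)) := by
          linarith only [hlo, hSu, hHge, h4']
        have h7 := le_of_mul_le_mul_left h6 hfacp
        linarith only [h7]
  -- measure bracketing
  have hedge1 : 0 ≤ ustar - t * cp := by
    have h1 : t * cp ≤ t * m' :=
      mul_le_mul_of_nonneg_left (le_trans (le_abs_self cp) hcp_abs) ht.le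
    have h2 : t * cp ≤ η := le_trans h1 htm
    linarith [hηc, hu0]
  have hedge2 : 0 ≤ ustar - t * cm := by
    have h1 : t * cm ≤ t * m' :=
      mul_le_mul_of_nonneg_left (le_trans (le_abs_self cm) hcm_abs) ht.le
    have h2 : t * cm ≤ η := le_trans h1 htm
    linarith [hηc, hu0]
  have hμfin : volume (Icc (0:ℝ) 1 ∩ S) ≠ ⊤ := by
    apply ne_top_of_le_ne_top _ (measure_mono inter_subset_left)
    rw [Real.volume_Icc]
    exact ENNReal.ofReal_ne_top
  obtain ⟨μr, hμrdef⟩ : ∃ r : ℝ, r = (volume (Icc (0:ℝ) 1 ∩ S)).toReal := ⟨_, rfl⟩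
  have hμ_lb : ustar - t * cp ≤ μr := by
    have h1 : ENNReal.ofReal (ustar - t * cp) ≤ volume (Icc (0:ℝ) 1 ∩ S) := by
      calc ENNReal.ofReal (ustar - t * cp) = volume (Icc (0:ℝ) (ustar - t * cp)) := by
            rw [Real.volume_Icc, sub_zero]
        _ ≤ volume (Icc (0:ℝ) 1 ∩ S) := measure_mono hL1
    rw [hμrdef]
    exact (ENNReal.ofReal_le_iff_le_toReal hμfin).1 h1
  have hμ_ub : μr ≤ ustar - t * cm := by
    rw [hμrdef]
    apply ENNReal.toReal_le_of_le_ofReal hedge2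
    calc volume (Icc (0:ℝ) 1 ∩ S) ≤ volume (Icc (0:ℝ) (ustar - t * cm)) := measure_mono hL2
      _ = ENNReal.ofReal (ustar - t * cm) := by rw [Real.volume_Icc, sub_zero]
  -- integral identities
  have hindS : (∫ u in Icc (0:ℝ) 1, (if Q u + t * H t u ≤ y then (1:ℝ) else 0)) = μr := by
    have h1 : ∀ u : ℝ, (if Q u + t * H t u ≤ y then (1:ℝ) else 0)
        = S.indicator (fun _ => (1:ℝ)) u := by
      intro u
      by_cases hc : Q u + t * H t u ≤ y
      · simp [Set.indicator_apply, hSdef, hc]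
      · simp [Set.indicator_apply, hSdef, hc]
    simp_rw [h1]
    rw [MeasureTheory.setIntegral_indicator hS_meas, setIntegral_const, hμrdef]
    simp
    rfl
  have hT_meas : MeasurableSet {u : ℝ | Q u ≤ y} :=
    measurableSet_le hQ_cont.measurable measurable_const
  have hT_eq : Icc (0:ℝ) 1 ∩ {u : ℝ | Q u ≤ y} = Icc 0 ustar := by
    ext u
    simp only [mem_inter_iff, mem_Icc, mem_setOf_eq]
    constructor
    · rintro ⟨⟨h0, h1'⟩, h2⟩
      rw [hQ_eq u ⟨h0, h1'⟩] at h2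
      exact ⟨h0, (hqle u ⟨h0, h1'⟩).1 h2⟩
    · rintro ⟨h0, h2⟩
      have hu' : u ∈ Icc (0:ℝ) 1 := ⟨h0, le_trans h2 hu1.le⟩
      refine ⟨⟨h0, hu'.2⟩, ?_⟩
      rw [hQ_eq u hu']
      exact (hqle u hu').2 h2
  have hindT : (∫ u in Icc (0:ℝ) 1, (if Q u ≤ y then (1:ℝ) else 0)) = ustar := by
    have h1 : ∀ u : ℝ, (if Q u ≤ y then (1:ℝ) else 0)
        = ({u : ℝ | Q u ≤ y}).indicator (fun _ => (1:ℝ)) u := by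
      intro u
      by_cases hc : Q u ≤ y
      · simp [Set.indicator_apply, hc]
      · simp [Set.indicator_apply, hc]
    simp_rw [h1]
    rw [MeasureTheory.setIntegral_indicator hT_meas, setIntegral_const, hT_eq,
      Measure.real, Real.volume_Icc, sub_zero, ENNReal.toReal_ofReal hu0.le]
    simp
  -- integrability
  have hintW : IntegrableOn W (Icc (0:ℝ) 1) := hW_cont.integrableOn_Icc
  have hvolIcc : volume (Icc (0:ℝ) 1) < ⊤ := by
    rw [Real.volume_Icc]; exact ENNReal.ofReal_lt_top
  have hconst1 : IntegrableOn (fun _ : ℝ => (1:ℝ)) (Icc (0:ℝ) 1) :=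
    integrableOn_const hvolIcc.ne
  have hmeas1 : Measurable fun u => (if Q u + t * H t u ≤ y then (1:ℝ) else 0) :=
    Measurable.ite hS_meas measurable_const measurable_const
  have hmeas0 : Measurable fun u => (if Q u ≤ y then (1:ℝ) else 0) :=
    Measurable.ite hT_meas measurable_const measurable_const
  have habsW : IntegrableOn (fun u => |W u|) (Icc (0:ℝ) 1) := hintW.abs
  have hf1 : IntegrableOn (fun u => (if Q u + t * H t u ≤ y then (1:ℝ) else 0) * W u) (Icc (0:ℝ) 1) := by
    apply Integrable.mono' habsW ((hmeas1.mul hW_cont.measurable).aestronglyMeasurable)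
    apply ae_of_all
    intro u
    rw [Real.norm_eq_abs, Pi.mul_apply, abs_mul]
    have h1 : |if Q u + t * H t u ≤ y then (1:ℝ) else 0| ≤ 1 := by
      split_ifs <;> simp
    exact mul_le_of_le_one_left (abs_nonneg (W u)) h1
  have hf0 : IntegrableOn (fun u => (if Q u ≤ y then (1:ℝ) else 0) * W u) (Icc (0:ℝ) 1) := by
    apply Integrable.mono' habsW ((hmeas0.mul hW_cont.measurable).aestronglyMeasurable)
    apply ae_of_all
    intro u
    rw [Real.norm_eq_abs, Pi.mul_apply, abs_mul]
    have h1 : |if Q u ≤ y then (1:ℝ) else 0| ≤ 1 := by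
      split_ifs <;> simp
    exact mul_le_of_le_one_left (abs_nonneg (W u)) h1
  have hd1 : IntegrableOn (fun u => (if Q u + t * H t u ≤ y then (1:ℝ) else 0)) (Icc (0:ℝ) 1) := by
    apply Integrable.mono' hconst1 hmeas1.aestronglyMeasurable
    apply ae_of_all
    intro u
    rw [Real.norm_eq_abs]
    split_ifs <;> simp
  have hd0 : IntegrableOn (fun u => (if Q u ≤ y then (1:ℝ) else 0)) (Icc (0:ℝ) 1) := by
    apply Integrable.mono' hconst1 hmeas0.aestronglyMeasurable
    apply ae_of_all
    intro u
    rw [Real.norm_eq_abs]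
    split_ifs <;> simp
  -- replace q,w by Q,W in the goal
  have hcongr1 : (∫ u in Icc (0:ℝ) 1, (if q u + t * H t u ≤ y then (1:ℝ) else 0) * w u)
      = ∫ u in Icc (0:ℝ) 1, (if Q u + t * H t u ≤ y then (1:ℝ) else 0) * W u := by
    apply setIntegral_congr_fun measurableSet_Icc
    intro u hu
    simp only [hQ_eq u hu, hW_eq u hu]
  have hcongr0 : (∫ u in Icc (0:ℝ) 1, (if q u ≤ y then (1:ℝ) else 0) * w u)
      = ∫ u in Icc (0:ℝ) 1, (if Q u ≤ y then (1:ℝ) else 0) * W u := by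
    apply setIntegral_congr_fun measurableSet_Icc
    intro u hu
    simp only [hQ_eq u hu, hW_eq u hu]
  -- error term
  obtain ⟨E, hEdef⟩ : ∃ E : ℝ, E = ∫ u in Icc (0:ℝ) 1,
      ((if Q u + t * H t u ≤ y then (1:ℝ) else 0) - (if Q u ≤ y then (1:ℝ) else 0)) * (W u - w ustar) :=
    ⟨_, rfl⟩
  have hE_bound : |E| ≤ ε' * (2 * (t * m')) := by
    have hband_meas : MeasurableSet (Icc (ustar - t*m') (ustar + t*m')) := measurableSet_Icc
    have hg_int : Integrable ((Icc (ustar - t*m') (ustar + t*m')).indicator (fun _ => ε'))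
        (volume.restrict (Icc (0:ℝ) 1)) :=
      Integrable.indicator (integrableOn_const hvolIcc.ne) hband_meas
    have hptwise : ∀ u, u ∈ Icc (0:ℝ) 1 →
        ‖((if Q u + t * H t u ≤ y then (1:ℝ) else 0) - (if Q u ≤ y then (1:ℝ) else 0))
          * (W u - w ustar)‖
        ≤ (Icc (ustar - t*m') (ustar + t*m')).indicator (fun _ => ε') u := by
      intro u hu
      by_cases hb : u ∈ Icc (ustar - t*m') (ustar + t*m')
      · rw [Set.indicator_of_mem hb]
        have huJ : u ∈ J := by
          rw [hJdef]
          exact ⟨by linarith only [hb.1, htm], by linarith only [hb.2, htm]⟩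
        have hwb : |W u - w ustar| ≤ ε' := by
          rw [hW_eq u hu]
          exact (hη u hu (hJdist u huJ)).2.1
        have hdb : |(if Q u + t * H t u ≤ y then (1:ℝ) else 0)
            - (if Q u ≤ y then (1:ℝ) else 0)| ≤ 1 := by
          split_ifs <;> norm_num
        rw [Real.norm_eq_abs, abs_mul]
        calc |(if Q u + t * H t u ≤ y then (1:ℝ) else 0) - (if Q u ≤ y then (1:ℝ) else 0)|
              * |W u - w ustar|
            ≤ 1 * ε' := mul_le_mul hdb hwb (abs_nonneg _) one_pos.le
          _ = ε' := one_mul ε'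
      · rw [Set.indicator_of_notMem hb]
        have hd0' : (if Q u + t * H t u ≤ y then (1:ℝ) else 0)
            = (if Q u ≤ y then (1:ℝ) else 0) := by
          rw [mem_Icc, not_and_or] at hb
          push_neg at hb
          rcases hb with hb | hb
          · have h1 : u ≤ ustar - t*cp := by
              have h99 := (abs_le.1 hcp_tabs).2
              linarith only [h99, hb]
            have h2 := hL1 ⟨hu.1, h1⟩
            have h3 : Q u + t*H t u ≤ y := h2.2
            have h4 : Q u ≤ y := by
              rw [hQ_eq u hu]
              refine (hqle u hu).2 ?_
              have h5 : 0 ≤ t * m' := mul_nonneg ht.le hm'_pos.le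
              linarith only [h5, hb]
            rw [if_pos h3, if_pos h4]
          · have h3 : ¬ (Q u + t*H t u ≤ y) := by
              intro hc
              have h6 := (hL2 ⟨hu, hc⟩).2
              have h7 := (abs_le.1 hcm_tabs).1
              linarith only [h6, h7, hb]
            have h4 : ¬ (Q u ≤ y) := by
              rw [hQ_eq u hu]
              intro hc
              have h6 := (hqle u hu).1 hc
              have h5 : 0 ≤ t * m' := mul_nonneg ht.le hm'_pos.le
              linarith only [h5, h6, hb]
            rw [if_neg h3, if_neg h4]
        rw [hd0']
        simp
    have hae : ∀ᵐ u ∂(volume.restrict (Icc (0:ℝ) 1)),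
        ‖((if Q u + t * H t u ≤ y then (1:ℝ) else 0) - (if Q u ≤ y then (1:ℝ) else 0))
          * (W u - w ustar)‖
        ≤ (Icc (ustar - t*m') (ustar + t*m')).indicator (fun _ => ε') u :=
      (ae_restrict_iff' measurableSet_Icc).2 (ae_of_all _ hptwise)
    have hnorm := norm_integral_le_of_norm_le hg_int hae
    have hint_g : (∫ u in Icc (0:ℝ) 1,
        (Icc (ustar - t*m') (ustar + t*m')).indicator (fun _ => ε') u) ≤ ε' * (2*(t*m')) := by
      rw [MeasureTheory.setIntegral_indicator hband_meas, setIntegral_const]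
      have h1 : volume (Icc (0:ℝ) 1 ∩ Icc (ustar - t*m') (ustar + t*m'))
          ≤ ENNReal.ofReal (2*(t*m')) := by
        refine le_trans (measure_mono inter_subset_right) ?_
        rw [Real.volume_Icc]
        apply ENNReal.ofReal_le_ofReal
        exact le_of_eq (by ring)
      have h2 := ENNReal.toReal_le_of_le_ofReal
        (mul_nonneg (by norm_num) (mul_nonneg ht.le hm'_pos.le) : (0:ℝ) ≤ 2*(t*m')) h1
      rw [smul_eq_mul]
      calc (volume (Icc (0:ℝ) 1 ∩ Icc (ustar - t*m') (ustar + t*m'))).toReal * ε'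
          ≤ (2*(t*m')) * ε' := mul_le_mul_of_nonneg_right h2 hε'_pos.le
        _ = ε' * (2*(t*m')) := by ring
    rw [hEdef, ← Real.norm_eq_abs]
    exact le_trans hnorm hint_g
  have hsplit : (∫ u in Icc (0:ℝ) 1, (if Q u + t * H t u ≤ y then (1:ℝ) else 0) * W u)
      - (∫ u in Icc (0:ℝ) 1, (if Q u ≤ y then (1:ℝ) else 0) * W u)
      = E + (μr - ustar) * w ustar := by
    have hfun : (fun u => ((if Q u + t * H t u ≤ y then (1:ℝ) else 0)
          - (if Q u ≤ y then (1:ℝ) else 0)) * (W u - w ustar))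
        = fun u => (if Q u + t * H t u ≤ y then (1:ℝ) else 0) * W u
            - (if Q u ≤ y then (1:ℝ) else 0) * W u
            - (w ustar * (if Q u + t * H t u ≤ y then (1:ℝ) else 0)
               - w ustar * (if Q u ≤ y then (1:ℝ) else 0)) := by
      funext u; ring
    have hI2 : IntegrableOn (fun u => w ustar * (if Q u + t * H t u ≤ y then (1:ℝ) else 0))
        (Icc (0:ℝ) 1) := hd1.const_mul _
    have hI3 : IntegrableOn (fun u => w ustar * (if Q u ≤ y then (1:ℝ) else 0))
        (Icc (0:ℝ) 1) := hd0.const_mul _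
    have hEeq : E = (∫ u in Icc (0:ℝ) 1, (if Q u + t * H t u ≤ y then (1:ℝ) else 0) * W u)
        - (∫ u in Icc (0:ℝ) 1, (if Q u ≤ y then (1:ℝ) else 0) * W u)
        - (w ustar * μr - w ustar * ustar) := by
      rw [hEdef, hfun]
      have hsub1 : IntegrableOn (fun u => (if Q u + t * H t u ≤ y then (1:ℝ) else 0) * W u
          - (if Q u ≤ y then (1:ℝ) else 0) * W u) (Icc (0:ℝ) 1) := hf1.sub hf0
      have hsub2 : IntegrableOn (fun u => w ustar * (if Q u + t * H t u ≤ y then (1:ℝ) else 0)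
          - w ustar * (if Q u ≤ y then (1:ℝ) else 0)) (Icc (0:ℝ) 1) := hI2.sub hI3
      rw [integral_sub hsub1 hsub2, integral_sub hf1 hf0, integral_sub hI2 hI3,
        integral_const_mul, integral_const_mul, hindS, hindT]
    rw [hEeq]; ring
  -- final assembly
  rw [Real.dist_eq, hcongr1, hcongr0, hsplit, ← hpdef, ← hadef]
  have hX : |μr - (ustar - t * (a / p))| ≤ t * (κ * ε') := by
    rw [abs_le]
    constructor
    · have h1 : ustar - t * cp = ustar - t * (a/p) - t * (κ * ε') := by
        rw [hcpdef]; ring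
      linarith only [hμ_lb, h1]
    · have h1 : ustar - t * cm = ustar - t * (a/p) + t * (κ * ε') := by
        rw [hcmdef]; ring
      linarith only [hμ_ub, h1]
  have hval : 1 / t * (E + (μr - ustar) * w ustar) - -(w ustar / p) * a
      = (E + (μr - (ustar - t * (a / p))) * w ustar) / t := by
    field_simp [(show (0:ℝ) < t from ht).ne', hp_pos.ne']
    ring
  rw [hval]
  rw [abs_div, abs_of_pos (show (0:ℝ) < t from ht), div_lt_iff₀ (show (0:ℝ) < t from ht)]
  have habs : |E + (μr - (ustar - t * (a / p))) * w ustar|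
      ≤ ε' * (2 * (t * m')) + t * (κ * ε') * |w ustar| := by
    calc |E + (μr - (ustar - t * (a / p))) * w ustar|
        ≤ |E| + |(μr - (ustar - t * (a / p))) * w ustar| := abs_add_le _ _
      _ ≤ ε' * (2 * (t * m')) + t * (κ * ε') * |w ustar| := by
          rw [abs_mul]
          have h77 := mul_le_mul_of_nonneg_right hX (abs_nonneg (w ustar))
          linarith only [h77, hE_bound]
  have hKe : ε' * (2 * (t * m')) + t * (κ * ε') * |w ustar| < ε * t := by
    have h1 : ε' * (2 * (t * m')) + t * (κ * ε') * |w ustar| = t * (ε' * (K - 1)) := by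
      rw [hKdef]; ring
    rw [h1]
    have h2 : ε' * (K - 1) < ε' * K := by linarith only [hε'_pos]
    have h3 : ε' * K ≤ ε := by
      calc ε' * K ≤ (ε / K) * K := mul_le_mul_of_nonneg_right hε'_leε hK_pos.le
        _ = ε := div_mul_cancel₀ ε hK_pos.ne'
    calc t * (ε' * (K - 1)) < t * ε := mul_lt_mul_of_pos_left (lt_of_lt_of_le h2 h3) ht
      _ = ε * t := by ring
  exact lt_of_le_of_lt habs hKe
end

section
/- Lemma B.3 (solution of a Fredholm integral equation of the second kind). Let d be a natural number and let M₁, M₂, M₃, L : [0,1] → Matrix (Fin d) (Fin d) ℝ be continuous functions satisfying, for every τ ∈ [0,1], L(τ) = M₁(τ)·L(τ) + M₂(τ) + ∫₀¹ M₃(u)·L(u) du. Assume: (i) for every τ ∈ [0,1], the matrix I − M₁(τ) is invertible; define M̃₂(τ) := (I − M₁(τ))⁻¹·M₂(τ), M̃₃(τ) := M₃(τ)·(I − M₁(τ))⁻¹, and K := ∫₀¹ M̃₃(u) du; and (ii) Kⁿ → 0 as n → ∞. Then I − K is invertible and, for every τ ∈ [0,1], L(τ) = M̃₂(τ) + (I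 − M₁(τ))⁻¹·(I − K)⁻¹·∫₀¹ M̃₃(u)·M₂(u) du. -/
open MeasureTheory Set Topology Filter

/-- The entrywise (Bochner) integral over `[0,1]` of a matrix-valued function. -/
noncomputable def matIntegral {d : ℕ} (M : ℝ → Matrix (Fin d) (Fin d) ℝ) :
    Matrix (Fin d) (Fin d) ℝ :=
  Matrix.of fun i j => ∫ u in Icc (0 : ℝ) 1, M u i j

section aux

variable {d : ℕ}

lemma matIntegral_congr {f g : ℝ → Matrix (Fin d) (Fin d) ℝ}
    (h : EqOn f g (Icc (0:ℝ) 1)) : matIntegral f = matIntegral g := by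
  ext i j
  exact setIntegral_congr_fun measurableSet_Icc (fun u hu => by rw [h hu])

lemma contOn_entry {f : ℝ → Matrix (Fin d) (Fin d) ℝ}
    (hf : ContinuousOn f (Icc (0:ℝ) 1)) (i j : Fin d) :
    ContinuousOn (fun u => f u i j) (Icc (0:ℝ) 1) :=
  (Continuous.matrix_elem continuous_id i j).comp_continuousOn hf

lemma matIntegral_add {f g : ℝ → Matrix (Fin d) (Fin d) ℝ}
    (hf : ContinuousOn f (Icc (0:ℝ) 1)) (hg : ContinuousOn g (Icc (0:ℝ) 1)) :
    matIntegral (fun u => f u + g u) = matIntegral f + matIntegral g := by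
  ext i j
  simp only [matIntegral, Matrix.of_apply, Matrix.add_apply]
  exact integral_add ((contOn_entry hf i j).integrableOn_Icc)
    ((contOn_entry hg i j).integrableOn_Icc)

lemma matIntegral_mul_const {f : ℝ → Matrix (Fin d) (Fin d) ℝ}
    (hf : ContinuousOn f (Icc (0:ℝ) 1)) (A : Matrix (Fin d) (Fin d) ℝ) :
    matIntegral (fun u => f u * A) = matIntegral f * A := by
  ext i j
  simp only [matIntegral, Matrix.of_apply, Matrix.mul_apply]
  rw [integral_finset_sum _ (fun k _ =>
    ((contOn_entry hf i k).integrableOn_Icc).mul_const (A k j))]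
  exact Finset.sum_congr rfl fun k _ => integral_mul_const (A k j) _

end aux

/-- Lemma B.3 (solution of a Fredholm integral equation of the second kind):
if `L(τ) = M₁(τ)L(τ) + M₂(τ) + ∫₀¹ M₃(u)L(u) du` with `I − M₁(τ)` invertible for all
`τ` and `Kⁿ → 0` where `K := ∫₀¹ M₃(u)(I − M₁(u))⁻¹ du`, then `I − K` is invertible
and `L(τ) = (I − M₁(τ))⁻¹M₂(τ) + (I − M₁(τ))⁻¹(I − K)⁻¹ ∫₀¹ M₃(u)(I − M₁(u))⁻¹M₂(u) du`. -/
theorem fredholm_second_kind_solution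
    (d : ℕ) (M₁ M₂ M₃ L : ℝ → Matrix (Fin d) (Fin d) ℝ)
    (hM₁ : ContinuousOn M₁ (Icc (0 : ℝ) 1))
    (hM₂ : ContinuousOn M₂ (Icc (0 : ℝ) 1))
    (hM₃ : ContinuousOn M₃ (Icc (0 : ℝ) 1))
    (hL : ContinuousOn L (Icc (0 : ℝ) 1))
    (heq : ∀ τ ∈ Icc (0 : ℝ) 1,
      L τ = M₁ τ * L τ + M₂ τ + matIntegral (fun u => M₃ u * L u))
    (hinv : ∀ τ ∈ Icc (0 : ℝ) 1, IsUnit (1 - M₁ τ))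
    (K : Matrix (Fin d) (Fin d) ℝ)
    (hK : K = matIntegral (fun u => M₃ u * (1 - M₁ u)⁻¹))
    (hKpow : Tendsto (fun n : ℕ => K ^ n) atTop (𝓝 0)) :
    IsUnit (1 - K) ∧
      ∀ τ ∈ Icc (0 : ℝ) 1,
        L τ = (1 - M₁ τ)⁻¹ * M₂ τ +
          (1 - M₁ τ)⁻¹ * (1 - K)⁻¹ *
            matIntegral (fun u => M₃ u * (1 - M₁ u)⁻¹ * M₂ u) := by
  -- I - K is invertible
  have hdetK : (1 - K).det ≠ 0 := by
    intro h0
    obtain ⟨v, hv0, hv⟩ := Matrix.exists_mulVec_eq_zero_iff.mpr h0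
    have hKv : K.mulVec v = v := by
      have := hv
      rw [Matrix.sub_mulVec, Matrix.one_mulVec, sub_eq_zero] at this
      exact this.symm
    have hpow : ∀ n : ℕ, (K ^ n).mulVec v = v := by
      intro n
      induction n with
      | zero => simp [Matrix.one_mulVec]
      | succ n ih => rw [pow_succ, ← Matrix.mulVec_mulVec, hKv, ih]
    have h1 : Tendsto (fun n : ℕ => (K ^ n).mulVec v) atTop (𝓝 ((0 : Matrix (Fin d) (Fin d) ℝ).mulVec v)) :=
      ((continuous_id.matrix_mulVec continuous_const).tendsto 0).comp hKpow
    have h2 : Tendsto (fun _ : ℕ => v) atTop (𝓝 ((0 : Matrix (Fin d) (Fin d) ℝ).mulVec v)) := by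
      simpa only [hpow] using h1
    have := tendsto_nhds_unique h2 tendsto_const_nhds
    rw [Matrix.zero_mulVec] at this
    exact hv0 this.symm
  have hUK : IsUnit (1 - K) := (Matrix.isUnit_iff_isUnit_det _).mpr (isUnit_iff_ne_zero.mpr hdetK)
  -- determinants of 1 - M₁ τ
  have hdet : ∀ τ ∈ Icc (0:ℝ) 1, IsUnit (1 - M₁ τ).det :=
    fun τ hτ => (Matrix.isUnit_iff_isUnit_det _).mp (hinv τ hτ)
  -- continuity of the inverse
  have hsub : ContinuousOn (fun u => 1 - M₁ u) (Icc (0:ℝ) 1) := continuousOn_const.sub hM₁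
  have hcinv : ContinuousOn (fun u => (1 - M₁ u)⁻¹) (Icc (0:ℝ) 1) := by
    have hdetc : ContinuousOn (fun u => ((1 - M₁ u).det)⁻¹) (Icc (0:ℝ) 1) :=
      (continuous_id.matrix_det.comp_continuousOn hsub).inv₀
        (fun u hu => (hdet u hu).ne_zero)
    have hadj : ContinuousOn (fun u => (1 - M₁ u).adjugate) (Icc (0:ℝ) 1) :=
      continuous_id.matrix_adjugate.comp_continuousOn hsub
    have : ContinuousOn (fun u => ((1 - M₁ u).det)⁻¹ • (1 - M₁ u).adjugate) (Icc (0:ℝ) 1) :=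
      hdetc.smul hadj
    refine this.congr fun u _ => ?_
    rw [Matrix.inv_def, Ring.inverse_eq_inv']
  set J := matIntegral (fun u => M₃ u * L u) with hJdef
  -- solve for L pointwise
  have hLeq : ∀ τ ∈ Icc (0:ℝ) 1, L τ = (1 - M₁ τ)⁻¹ * (M₂ τ + J) := by
    intro τ hτ
    have h2 : (1 - M₁ τ) * L τ = M₂ τ + J := by
      rw [sub_mul, one_mul]
      nth_rewrite 1 [heq τ hτ]
      abel
    rw [← h2, ← mul_assoc, Matrix.nonsing_inv_mul _ (hdet τ hτ), one_mul]
  -- decompose J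
  set C := matIntegral (fun u => M₃ u * (1 - M₁ u)⁻¹ * M₂ u) with hCdef
  have hc3 : ContinuousOn (fun u => M₃ u * (1 - M₁ u)⁻¹) (Icc (0:ℝ) 1) := hM₃.mul hcinv
  have hJeq : J = C + K * J := by
    have h1 : EqOn (fun u => M₃ u * L u)
        (fun u => M₃ u * (1 - M₁ u)⁻¹ * M₂ u + (M₃ u * (1 - M₁ u)⁻¹) * J)
        (Icc (0:ℝ) 1) := by
      intro u hu
      simp only
      rw [hLeq u hu, ← mul_assoc, mul_add]
    conv_lhs => rw [hJdef]
    rw [matIntegral_congr h1, matIntegral_add (f := fun u => M₃ u * (1 - M₁ u)⁻¹ * M₂ u)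
        (g := fun u => M₃ u * (1 - M₁ u)⁻¹ * J) (hc3.mul hM₂) (hc3.mul continuousOn_const),
      matIntegral_mul_const hc3 J, ← hK, ← hCdef]
  have hJC : (1 - K) * J = C := by
    rw [sub_mul, one_mul]
    nth_rewrite 1 [hJeq]
    abel
  have hJval : J = (1 - K)⁻¹ * C := by
    rw [← hJC, ← mul_assoc, Matrix.nonsing_inv_mul _ (isUnit_iff_ne_zero.mpr hdetK), one_mul]
  refine ⟨hUK, fun τ hτ => ?_⟩
  rw [hLeq τ hτ, hJval, mul_add, mul_assoc]
end
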